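/- arXiv:2010.13614 — 5 statements merged into one kernel-verified Lean document; each statement's English description precedes it below -/
import Mathlib

section
/- Let k be an algebraically closed field of characteristic p > 0 and let W_n(k(x)) denote the ring of length-n truncated Witt vectors over the rational function field k(x), n ≥ 1. Let G = (G^1, …, G^n) ∈ W_n(k(x)) and let A and B be disjoint finite subsets of k such that every component G^i is regular at every point of k ∖ (A ∪ B) (i.e., for every b ∈ k ∖ (A ∪ B), G^i lies in the local ring of rational functions with no pole at b). Then there exist G_A, G_B ∈ W_n(k(x)) with G = G_A + G_B (addition in the Witt vector ring) such that every component of G_A is regular at every point of k ∖ A and every component of G_B is regular at every point of k ∖ B. -/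
/-- A rational function `f ∈ k(x)` is *regular at* `b ∈ k` (has no pole at `b`) if it can
be written as a quotient `q / r` of polynomials with `r(b) ≠ 0`; equivalently, `f` lies in
the local ring of `k[x]` at the maximal ideal `(x - b)`. -/
def RegularAt (k : Type) [Field k] (f : RatFunc k) (b : k) : Prop :=
  ∃ q r : Polynomial k, Polynomial.eval b r ≠ 0 ∧
    f = algebraMap (Polynomial k) (RatFunc k) q / algebraMap (Polynomial k) (RatFunc k) r

namespace WittPartition

open Polynomial

variable {k : Type} [Field k]

theorem regularAt_zero (b : k) : RegularAt k 0 b :=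
  ⟨0, 1, by simp, by simp⟩

theorem regularAt_one (b : k) : RegularAt k 1 b :=
  ⟨1, 1, by simp, by simp⟩

theorem ne_zero_of_eval_ne_zero {r : Polynomial k} {b : k} (h : r.eval b ≠ 0) : r ≠ 0 :=
  fun h0 => h (by simp [h0])

theorem regularAt_add {f g : RatFunc k} {b : k} (hf : RegularAt k f b)
    (hg : RegularAt k g b) : RegularAt k (f + g) b := by
  obtain ⟨q1, r1, h1, e1⟩ := hf
  obtain ⟨q2, r2, h2, e2⟩ := hg
  have hr1 : algebraMap (Polynomial k) (RatFunc k) r1 ≠ 0 :=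
    RatFunc.algebraMap_ne_zero (ne_zero_of_eval_ne_zero h1)
  have hr2 : algebraMap (Polynomial k) (RatFunc k) r2 ≠ 0 :=
    RatFunc.algebraMap_ne_zero (ne_zero_of_eval_ne_zero h2)
  refine ⟨q1 * r2 + r1 * q2, r1 * r2, by simp [h1, h2], ?_⟩
  rw [e1, e2, div_add_div _ _ hr1 hr2, map_add, map_mul, map_mul, map_mul]

theorem regularAt_mul {f g : RatFunc k} {b : k} (hf : RegularAt k f b)
    (hg : RegularAt k g b) : RegularAt k (f * g) b := by
  obtain ⟨q1, r1, h1, e1⟩ := hf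
  obtain ⟨q2, r2, h2, e2⟩ := hg
  refine ⟨q1 * q2, r1 * r2, by simp [h1, h2], ?_⟩
  rw [e1, e2]
  simp only [map_mul]
  rw [div_mul_div_comm]

theorem regularAt_neg {f : RatFunc k} {b : k} (hf : RegularAt k f b) :
    RegularAt k (-f) b := by
  obtain ⟨q, r, h1, e1⟩ := hf
  exact ⟨-q, r, h1, by rw [e1, map_neg, neg_div]⟩

/-- The subring of rational functions regular away from `A` (poles only inside `A`,
or at infinity). -/
def polesWithin (A : Finset k) : Subring (RatFunc k) where
  carrier := {f | ∀ b ∉ A, RegularAt k f b}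
  zero_mem' := fun b _ => regularAt_zero b
  one_mem' := fun b _ => regularAt_one b
  add_mem' := fun hf hg b hb => regularAt_add (hf b hb) (hg b hb)
  mul_mem' := fun hf hg b hb => regularAt_mul (hf b hb) (hg b hb)
  neg_mem' := fun hf b hb => regularAt_neg (hf b hb)

theorem mem_polesWithin {A : Finset k} {f : RatFunc k} :
    f ∈ polesWithin A ↔ ∀ b ∉ A, RegularAt k f b := Iff.rfl

/-- A regular point is not a zero of the (reduced) denominator. -/
theorem denom_eval_ne_zero {f : RatFunc k} {b : k} (h : RegularAt k f b) :
    f.denom.eval b ≠ 0 := by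
  obtain ⟨q, r, hr, e⟩ := h
  have hr0 : r ≠ 0 := ne_zero_of_eval_ne_zero hr
  have hrr : algebraMap (Polynomial k) (RatFunc k) r ≠ 0 := RatFunc.algebraMap_ne_zero hr0
  have hDD : algebraMap (Polynomial k) (RatFunc k) f.denom ≠ 0 :=
    RatFunc.algebraMap_ne_zero (RatFunc.denom_ne_zero f)
  have key : f.num * r = q * f.denom := by
    apply RatFunc.algebraMap_injective
    have this2 : algebraMap (Polynomial k) (RatFunc k) f.num /
        algebraMap (Polynomial k) (RatFunc k) f.denom =
        algebraMap (Polynomial k) (RatFunc k) q / algebraMap (Polynomial k) (RatFunc k) r := by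
      rw [RatFunc.num_div_denom f]; exact e
    rw [div_eq_div_iff hDD hrr] at this2
    rw [map_mul, map_mul]
    exact this2
  intro hb
  have hdvd : (X - C b) ∣ f.denom := dvd_iff_isRoot.mpr hb
  have hdvd2 : (X - C b) ∣ f.num * r := key ▸ hdvd.mul_left q
  rcases (prime_X_sub_C b).2.2 _ _ hdvd2 with hnum | hrdvd
  · exact not_isUnit_X_sub_C b ((RatFunc.isCoprime_num_denom f).isUnit_of_dvd' hnum hdvd)
  · exact hr (dvd_iff_isRoot.mp hrdvd)

theorem eval_prod_ne_zero (s : Multiset k) (c : k) (hc : c ∉ s) :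
    ((s.map fun a => X - C a).prod).eval c ≠ 0 := by
  rw [eval_multiset_prod]
  apply Multiset.prod_ne_zero
  intro h0
  rw [Multiset.map_map] at h0
  obtain ⟨a, ha, he⟩ := Multiset.mem_map.mp h0
  simp only [Function.comp_apply, eval_sub, eval_X, eval_C] at he
  rw [sub_eq_zero] at he
  exact hc (by rw [he]; exact ha)

/-- Partial-fraction splitting of a rational function regular away from `A ∪ B`. -/
theorem split_ratfunc [IsAlgClosed k] (A B : Finset k) (hAB : Disjoint A B) (f : RatFunc k)
    (h : ∀ b : k, b ∉ A → b ∉ B → RegularAt k f b) :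
    ∃ fa ∈ polesWithin A, ∃ fb ∈ polesWithin B, f = fa + fb := by
  classical
  obtain ⟨D, hfD⟩ : ∃ D, f.denom = D := ⟨_, rfl⟩
  have hroots : ∀ c ∈ D.roots, c ∈ A ∨ c ∈ B := by
    intro c hc
    by_contra hco
    push_neg at hco
    rw [← hfD] at hc
    exact denom_eval_ne_zero (h c hco.1 hco.2) (isRoot_of_mem_roots hc)
  set mA := D.roots.filter (· ∈ A) with hmAdef
  set mB := D.roots.filter (fun c => ¬ c ∈ A) with hmBdef
  set dA := (mA.map fun a => X - C a).prod with hdAdef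
  set dB := (mB.map fun a => X - C a).prod with hdBdef
  have hmA : ∀ c ∈ mA, c ∈ A := fun c hc => (Multiset.mem_filter.mp hc).2
  have hmB : ∀ c ∈ mB, c ∈ B := by
    intro c hc
    obtain ⟨hc1, hc2⟩ := Multiset.mem_filter.mp hc
    rcases hroots c hc1 with hca | hcb
    · exact absurd hca hc2
    · exact hcb
  have hmonicA : dA.Monic :=
    monic_multiset_prod_of_monic _ _ fun a _ => monic_X_sub_C a
  have hmonicB : dB.Monic :=
    monic_multiset_prod_of_monic _ _ fun a _ => monic_X_sub_C a
  have hD : D = dA * dB := by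
    have hmon : D.Monic := hfD ▸ RatFunc.monic_denom f
    conv_lhs => rw [(IsAlgClosed.splits D).eq_prod_roots_of_monic hmon]
    rw [hdAdef, hdBdef, ← Multiset.prod_add, ← Multiset.map_add, hmAdef, hmBdef,
      Multiset.filter_add_not]
  -- dA and dB are coprime
  have hcop : IsCoprime dA dB := by
    rw [← EuclideanDomain.gcd_isUnit_iff]
    by_contra hg
    set g := EuclideanDomain.gcd dA dB with hgdef
    have hg0 : g ≠ 0 := by
      intro h0
      rw [hgdef, EuclideanDomain.gcd_eq_zero_iff] at h0
      exact hmonicA.ne_zero h0.1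
    obtain ⟨c, hc⟩ := IsAlgClosed.exists_root g
      (fun hdeg => hg (isUnit_iff_degree_eq_zero.mpr hdeg))
    have hcA : c ∈ mA := by
      by_contra hcn
      exact eval_prod_ne_zero mA c hcn (hc.dvd (EuclideanDomain.gcd_dvd_left dA dB))
    have hcB : c ∈ mB := by
      by_contra hcn
      exact eval_prod_ne_zero mB c hcn (hc.dvd (EuclideanDomain.gcd_dvd_right dA dB))
    exact Finset.disjoint_left.mp hAB (hmA c hcA) (hmB c hcB)
  obtain ⟨q, r1, r2, _, _, heq⟩ :=
    Polynomial.div_eq_quo_add_rem_div_add_rem_div (RatFunc k) f.num hmonicA hmonicB hcop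
  have hdA0 : algebraMap (Polynomial k) (RatFunc k) dA ≠ 0 :=
    RatFunc.algebraMap_ne_zero hmonicA.ne_zero
  have hdB0 : algebraMap (Polynomial k) (RatFunc k) dB ≠ 0 :=
    RatFunc.algebraMap_ne_zero hmonicB.ne_zero
  have heq' : algebraMap (Polynomial k) (RatFunc k) f.num /
      (algebraMap (Polynomial k) (RatFunc k) dA * algebraMap (Polynomial k) (RatFunc k) dB) =
      algebraMap (Polynomial k) (RatFunc k) q +
        algebraMap (Polynomial k) (RatFunc k) r1 / algebraMap (Polynomial k) (RatFunc k) dA +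
        algebraMap (Polynomial k) (RatFunc k) r2 / algebraMap (Polynomial k) (RatFunc k) dB :=
    heq
  refine ⟨algebraMap (Polynomial k) (RatFunc k) (q * dA + r1) /
      algebraMap (Polynomial k) (RatFunc k) dA, ?_,
    algebraMap (Polynomial k) (RatFunc k) r2 / algebraMap (Polynomial k) (RatFunc k) dB, ?_, ?_⟩
  · intro c hc
    exact ⟨q * dA + r1, dA, eval_prod_ne_zero mA c (fun hm => hc (hmA c hm)), rfl⟩
  · intro c hc
    exact ⟨r2, dB, eval_prod_ne_zero mB c (fun hm => hc (hmB c hm)), rfl⟩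
  · have hfd : f.denom = dA * dB := hfD.trans hD
    conv_lhs => rw [← RatFunc.num_div_denom f, hfd]
    rw [map_mul, heq', map_add, map_mul, add_div, mul_div_assoc, div_self hdA0, mul_one]

/-! ### Witt vector lemmas -/

theorem aeval_mem_subring {R : Type*} [CommRing R] {σ : Type*} (S : Subring R)
    (φ : MvPolynomial σ ℤ) (v : σ → R) (h : ∀ i, v i ∈ S) :
    MvPolynomial.aeval v φ ∈ S := by
  induction φ using MvPolynomial.induction_on with
  | C a => simpa using intCast_mem S a
  | add f g hf hg => rw [map_add]; exact S.add_mem hf hg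
  | mul_X f i hf => rw [map_mul, MvPolynomial.aeval_X]; exact S.mul_mem hf (h i)

variable {p : ℕ} [hp : Fact p.Prime] {R : Type*} [CommRing R]

theorem coeff_add_mem (S : Subring R) (x y : WittVector p R)
    (hx : ∀ i, x.coeff i ∈ S) (hy : ∀ i, y.coeff i ∈ S) (i : ℕ) :
    (x + y).coeff i ∈ S := by
  rw [WittVector.add_coeff]
  apply aeval_mem_subring
  rintro ⟨j, m⟩
  fin_cases j
  · exact hx m
  · exact hy m

theorem coeff_sub_mem (S : Subring R) (x y : WittVector p R)
    (hx : ∀ i, x.coeff i ∈ S) (hy : ∀ i, y.coeff i ∈ S) (i : ℕ) :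
    (x - y).coeff i ∈ S := by
  rw [WittVector.sub_coeff]
  apply aeval_mem_subring
  rintro ⟨j, m⟩
  fin_cases j
  · exact hx m
  · exact hy m

theorem sub_coeff_zero (x y : WittVector p R) : (x - y).coeff 0 = x.coeff 0 - y.coeff 0 := by
  rw [WittVector.sub_coeff, WittVector.wittSub_zero]
  simp [WittVector.peval, Function.uncurry]

/-- Main Witt-vector splitting lemma by induction on the truncation length. -/
theorem witt_split (S SA SB : Subring R) (hA : SA ≤ S) (hB : SB ≤ S)
    (hsplit : ∀ s ∈ S, ∃ a ∈ SA, ∃ b ∈ SB, s = a + b) :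
    ∀ (n : ℕ) (X : WittVector p R), (∀ i, X.coeff i ∈ S) →
      ∃ XA XB : WittVector p R, (∀ i, XA.coeff i ∈ SA) ∧ (∀ i, XB.coeff i ∈ SB) ∧
        WittVector.truncate n X = WittVector.truncate n XA + WittVector.truncate n XB := by
  intro n
  induction n with
  | zero =>
    intro X _
    refine ⟨0, 0, ?_, ?_, ?_⟩
    · intro i; rw [WittVector.zero_coeff]; exact SA.zero_mem
    · intro i; rw [WittVector.zero_coeff]; exact SB.zero_mem
    · apply TruncatedWittVector.ext; intro i; exact i.elim0
  | succ m ih =>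
    intro X hX
    obtain ⟨a, haA, b, hbB, hab⟩ := hsplit (X.coeff 0) (hX 0)
    set Ea : WittVector p R := WittVector.mk p (fun i => if i = 0 then a else 0) with hEa
    set Eb : WittVector p R := WittVector.mk p (fun i => if i = 0 then b else 0) with hEb
    have hEac : ∀ i, Ea.coeff i ∈ SA := by
      intro i
      rw [hEa, WittVector.coeff_mk]
      split
      · exact haA
      · exact SA.zero_mem
    have hEbc : ∀ i, Eb.coeff i ∈ SB := by
      intro i
      rw [hEb, WittVector.coeff_mk]
      split
      · exact hbB
      · exact SB.zero_mem
    set Y : WittVector p R := X - Ea - Eb with hYdef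
    have hY : ∀ i, Y.coeff i ∈ S :=
      coeff_sub_mem S _ _ (coeff_sub_mem S _ _ hX (fun i => hA (hEac i))) (fun i => hB (hEbc i))
    have hY0 : Y.coeff 0 = 0 := by
      rw [hYdef, sub_coeff_zero, sub_coeff_zero, hEa, hEb, WittVector.coeff_mk,
        WittVector.coeff_mk, if_pos rfl, if_pos rfl, hab]
      ring
    set Y' : WittVector p R := WittVector.mk p (fun i => Y.coeff (i + 1)) with hY'def
    have hVY' : WittVector.verschiebung Y' = Y := by
      apply WittVector.ext
      intro i
      cases i with
      | zero => rw [WittVector.verschiebung_coeff_zero, hY0]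
      | succ j =>
        rw [WittVector.verschiebung_coeff_succ, hY'def, WittVector.coeff_mk]
    obtain ⟨YA, YB, hYA, hYB, htr⟩ := ih Y' (fun i => by
      rw [hY'def, WittVector.coeff_mk]; exact hY (i + 1))
    refine ⟨Ea + WittVector.verschiebung YA, Eb + WittVector.verschiebung YB, ?_, ?_, ?_⟩
    · refine coeff_add_mem SA _ _ hEac ?_
      intro i
      cases i with
      | zero => rw [WittVector.verschiebung_coeff_zero]; exact SA.zero_mem
      | succ j => rw [WittVector.verschiebung_coeff_succ]; exact hYA j
    · refine coeff_add_mem SB _ _ hEbc ?_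
      intro i
      cases i with
      | zero => rw [WittVector.verschiebung_coeff_zero]; exact SB.zero_mem
      | succ j => rw [WittVector.verschiebung_coeff_succ]; exact hYB j
    · have hXeq : X = Ea + Eb + WittVector.verschiebung Y' := by
        rw [hVY', hYdef]; ring
      have hVtr : WittVector.truncate (p := p) (m + 1) (WittVector.verschiebung Y') =
          WittVector.truncate (m + 1) (WittVector.verschiebung (YA + YB)) := by
        apply TruncatedWittVector.ext
        intro i
        rw [WittVector.coeff_truncate, WittVector.coeff_truncate]
        rcases i with ⟨iv, hi⟩
        cases iv with
        | zero =>
          show (WittVector.verschiebung Y').coeff 0 =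
            (WittVector.verschiebung (YA + YB)).coeff 0
          rw [WittVector.verschiebung_coeff_zero, WittVector.verschiebung_coeff_zero]
        | succ j =>
          have hj : j < m := Nat.succ_lt_succ_iff.mp hi
          have htr2 : WittVector.truncate m Y' = WittVector.truncate m (YA + YB) := by
            rw [map_add]; exact htr
          have hcj : Y'.coeff j = (YA + YB).coeff j := by
            have h3 := congrArg (TruncatedWittVector.coeff (⟨j, hj⟩ : Fin m)) htr2
            rwa [WittVector.coeff_truncate, WittVector.coeff_truncate] at h3
          show (WittVector.verschiebung Y').coeff (j + 1) =
            (WittVector.verschiebung (YA + YB)).coeff (j + 1)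
          rw [WittVector.verschiebung_coeff_succ, WittVector.verschiebung_coeff_succ, hcj]
      have key : WittVector.truncate (p := p) (m + 1) (Ea + Eb + WittVector.verschiebung Y') =
          WittVector.truncate (m + 1) (Ea + Eb + WittVector.verschiebung (YA + YB)) := by
        simp only [map_add, hVtr]
      have hVadd : WittVector.verschiebung (YA + YB) =
          WittVector.verschiebung YA + WittVector.verschiebung YB := map_add _ _ _
      have harr : Ea + Eb + WittVector.verschiebung (YA + YB) =
          (Ea + WittVector.verschiebung YA) + (Eb + WittVector.verschiebung YB) := by
        rw [hVadd]; ring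
      rw [hXeq, key, harr, map_add]

end WittPartition

/-- **Partition of Witt vectors according to poles** (Proposition 5.3 of the paper):
let `k` be an algebraically closed field of characteristic `p > 0` and `G` a length-`n`
truncated Witt vector over `k(x)`. If `A` and `B` are disjoint finite subsets of `k` such
that every component of `G` is regular at every point of `k ∖ (A ∪ B)`, then `G` can be
written as a sum `G = G_A + G_B` of truncated Witt vectors, where every component of `G_A`
is regular away from `A`, and every component of `G_B` is regular away from `B`. -/
theorem wittVector_partition
    (p : ℕ) [Fact p.Prime] (k : Type) [Field k] [IsAlgClosed k] [CharP k p]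
    (n : ℕ) (hn : 1 ≤ n)
    (G : TruncatedWittVector p n (RatFunc k))
    (A B : Finset k) (hAB : Disjoint A B)
    (hreg : ∀ (i : Fin n) (b : k), b ∉ A → b ∉ B →
      RegularAt k (TruncatedWittVector.coeff i G) b) :
    ∃ GA GB : TruncatedWittVector p n (RatFunc k),
      G = GA + GB ∧
      (∀ (i : Fin n) (b : k), b ∉ A → RegularAt k (TruncatedWittVector.coeff i GA) b) ∧
      (∀ (i : Fin n) (b : k), b ∉ B → RegularAt k (TruncatedWittVector.coeff i GB) b) := by
  classical
  open WittPartition in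
  let S : Subring (RatFunc k) := polesWithin (A ∪ B)
  let SA : Subring (RatFunc k) := polesWithin A
  let SB : Subring (RatFunc k) := polesWithin B
  have hA : SA ≤ S := by
    intro f hf b hb
    exact hf b (fun hbA => hb (Finset.mem_union_left B hbA))
  have hB : SB ≤ S := by
    intro f hf b hb
    exact hf b (fun hbB => hb (Finset.mem_union_right A hbB))
  have hsplit : ∀ s ∈ S, ∃ a ∈ SA, ∃ b ∈ SB, s = a + b := by
    intro s hs
    exact split_ratfunc A B hAB s (fun b hbA hbB =>
      hs b (fun hb => (Finset.mem_union.mp hb).elim hbA hbB))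
  set X : WittVector p (RatFunc k) :=
    WittVector.mk p (fun i => if h : i < n then G.coeff ⟨i, h⟩ else 0) with hXdef
  have hX : ∀ i, X.coeff i ∈ S := by
    intro i
    rw [hXdef, WittVector.coeff_mk]
    split
    · intro b hb
      exact hreg _ b (fun hbA => hb (Finset.mem_union_left B hbA))
        (fun hbB => hb (Finset.mem_union_right A hbB))
    · exact S.zero_mem
  have hGX : WittVector.truncate n X = G := by
    apply TruncatedWittVector.ext
    intro i
    rw [WittVector.coeff_truncate, hXdef, WittVector.coeff_mk, dif_pos i.isLt]
  obtain ⟨XA, XB, hXA, hXB, htr⟩ := witt_split S SA SB hA hB hsplit n X hX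
  refine ⟨WittVector.truncate n XA, WittVector.truncate n XB, ?_, ?_, ?_⟩
  · rw [← hGX, htr]
  · intro i b hb
    rw [WittVector.coeff_truncate]
    exact hXA i b hb
  · intro i b hb
    rw [WittVector.coeff_truncate]
    exact hXB i b hb
end

section
/- Let p be a prime and K a perfect field of characteristic p equipped with an additive valuation ν : K → ℚ ∪ {∞} (ν(0) = ∞, ν(uv) = ν(u) + ν(v), ν(u + v) ≥ min(ν(u), ν(v))). Let r_0, δ ∈ ℚ with δ ≥ 0, let N ≥ 1 be an integer, and let (a_i)_{i ≥ 1} be elements of K with ν(a_i) ≥ p(r_0·i − δ) for all i ≥ 1. Then there exist b_1, …, b_N ∈ K with ν(b_j) ≥ p(r_0·j − δ) for 1 ≤ j ≤ N such that, defining for k ≥ 1: c_k := a_k + (b_{k/p})^p·[p ∣ k and k/p ≤ N] − b_k·[k ≤ N], one has ν(c_k) ≥ p(r_0·k − δ) for all k ≥ 1, and c_{pk} = 0 for all 1 ≤ k ≤ N. (Equivalently: for a := Σ_{j=1}^N b_j x^{−j} and F := Σ_{i ≥ 1} a_i x^{−i}, the coefficients c_k of x^{−k} in F + a^p − a satisfy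 these conditions, using that (Σ b_j x^{−j})^p = Σ b_j^p x^{−pj} in characteristic p.) -/
open scoped Classical

/-- Recursive construction of the `b j`: `b j` is a `p`-th root of
`-a (p*j) + (b (p*j) if p*j ≤ N else 0)`. -/
def approxB {K : Type} [Field K] (p N : ℕ) (ρ : K → K) (a : ℕ → K) : ℕ → K
  | j =>
    if h : 1 ≤ j ∧ p * j ≤ N ∧ 2 ≤ p then
      ρ (-a (p * j) + approxB p N ρ a (p * j))
    else
      ρ (-a (p * j))
termination_by j => N - j
decreasing_by
  show N - p * j < N - j
  have h2 : 2 * j ≤ p * j := Nat.mul_le_mul_right j h.2.2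
  omega

lemma approxB_pow {K : Type} [Field K] (p N : ℕ) (ρ : K → K)
    (hρ : ∀ x, (ρ x) ^ p = x) (a : ℕ → K) (j : ℕ) (hj : 1 ≤ j) (hp2 : 2 ≤ p) :
    (approxB p N ρ a j) ^ p
      = -a (p * j) + (if p * j ≤ N then approxB p N ρ a (p * j) else 0) := by
  rw [approxB.eq_1]
  by_cases h : p * j ≤ N
  · rw [dif_pos ⟨hj, h, hp2⟩, if_pos h, hρ]
  · rw [dif_neg (by tauto), if_neg h, hρ, add_zero]

/-- **The approximation lemma** (Lemma 5.18 of the paper, equal-characteristic analogue of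
Obus–Wewers): let `K` be a perfect field of characteristic `p` with an additive valuation
`ν : K → ℚ ∪ {∞}`, let `r₀, δ ∈ ℚ` with `δ ≥ 0`, `N ≥ 1` an integer, and `(a_i)_{i ≥ 1}`
elements of `K` with `ν(a_i) ≥ p(r₀·i − δ)`. Then there exist `b_1, …, b_N ∈ K` with
`ν(b_j) ≥ p(r₀·j − δ)` such that the coefficients
`c_k = a_k + (b_{k/p})^p·[p ∣ k ∧ k/p ≤ N] − b_k·[k ≤ N]`
(the coefficients of `x^{-k}` in `F + a^p − a` for `a = Σ_{j=1}^N b_j x^{-j}` and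
`F = Σ_{i≥1} a_i x^{-i}`) satisfy `ν(c_k) ≥ p(r₀·k − δ)` for all `k ≥ 1` and `c_{pk} = 0`
for all `1 ≤ k ≤ N`. -/
theorem approximation_lemma
    (p : ℕ) [hp : Fact p.Prime] (K : Type) [Field K] [CharP K p]
    (hperfect : ∀ x : K, ∃ y : K, y ^ p = x)
    (ν : K → WithTop ℚ)
    (hν0 : ν 0 = ⊤)
    (hνmul : ∀ u v : K, ν (u * v) = ν u + ν v)
    (hνadd : ∀ u v : K, min (ν u) (ν v) ≤ ν (u + v))
    (r0 δ : ℚ) (hδ : 0 ≤ δ) (N : ℕ) (hN : 1 ≤ N)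
    (a : ℕ → K)
    (ha : ∀ i : ℕ, 1 ≤ i → (((p : ℚ) * (r0 * (i : ℚ) - δ) : ℚ) : WithTop ℚ) ≤ ν (a i)) :
    ∃ b : ℕ → K,
      (∀ j : ℕ, 1 ≤ j → j ≤ N →
        (((p : ℚ) * (r0 * (j : ℚ) - δ) : ℚ) : WithTop ℚ) ≤ ν (b j)) ∧
      (∀ k : ℕ, 1 ≤ k →
        (((p : ℚ) * (r0 * (k : ℚ) - δ) : ℚ) : WithTop ℚ) ≤
          ν (a k + (if p ∣ k ∧ k / p ≤ N then (b (k / p)) ^ p else 0)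
              - (if k ≤ N then b k else 0))) ∧
      (∀ k : ℕ, 1 ≤ k → k ≤ N →
        a (p * k) + (if p ∣ p * k ∧ (p * k) / p ≤ N then (b ((p * k) / p)) ^ p else 0)
            - (if p * k ≤ N then b (p * k) else 0) = 0) := by
  have hp2 : 2 ≤ p := hp.out.two_le
  have hppos : 0 < p := hp.out.pos
  have h2q : (2 : ℚ) ≤ (p : ℚ) := by exact_mod_cast hp2
  choose ρ hρ using hperfect
  -- basic valuation facts
  have hνone : ν 1 = 0 ∨ ν 1 = ⊤ := by
    have h := hνmul 1 1
    rw [one_mul] at h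
    cases hx : ν (1 : K) with
    | top => exact Or.inr rfl
    | coe v =>
      left
      rw [hx] at h
      have hv : v = v + v := by exact_mod_cast h
      have hv0 : v = 0 := by linarith
      exact_mod_cast hv0
  have hneg : ∀ u : K, ν (-u) = ν u := by
    intro u
    rcases hνone with h1 | h1
    · have hm : ν (-1 : K) = 0 := by
        have h := hνmul (-1) (-1)
        rw [neg_mul_neg, one_mul, h1] at h
        cases hx : ν (-1 : K) with
        | top => rw [hx] at h; simp at h
        | coe v =>
          rw [hx] at h
          have hv : (0 : ℚ) = v + v := by exact_mod_cast h
          have hv0 : v = 0 := by linarith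
          exact_mod_cast hv0
      have h := hνmul (-1) u
      rw [neg_one_mul] at h
      rw [h, hm, zero_add]
    · have htop : ∀ w : K, ν w = ⊤ := by
        intro w
        have h := hνmul w 1
        rw [mul_one, h1, add_top] at h
        exact h
      rw [htop, htop]
  have hpowv : ∀ (x : K) (v : ℚ), ν x = (v : WithTop ℚ) →
      ∀ n : ℕ, ν (x ^ (n + 1)) = ((((n + 1 : ℕ) : ℚ) * v : ℚ) : WithTop ℚ) := by
    intro x v hx n
    induction n with
    | zero => rw [pow_one, hx]; norm_num
    | succ n ih =>
      have hx2 : x ^ (n + 2) = x ^ (n + 1) * x := by ring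
      rw [hx2, hνmul, ih, hx, ← WithTop.coe_add]
      congr 1
      push_cast
      ring
  have hroot : ∀ (x : K) (q : ℚ),
      ((((p : ℚ) * q : ℚ)) : WithTop ℚ) ≤ ν (x ^ p) → ((q : ℚ) : WithTop ℚ) ≤ ν x := by
    intro x q hq
    cases hx : ν x with
    | top => exact le_top
    | coe v =>
      have hp1 : p = (p - 1) + 1 := by omega
      rw [hp1, hpowv x v hx (p - 1)] at hq
      have hcast : ((p - 1 + 1 : ℕ) : ℚ) = (p : ℚ) := by rw [← hp1]
      have hq' : ((p - 1 + 1 : ℕ) : ℚ) * q ≤ ((p - 1 + 1 : ℕ) : ℚ) * v := by exact_mod_cast hq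
      rw [hcast] at hq'
      have : q ≤ v := by nlinarith
      exact_mod_cast this
  set b : ℕ → K := approxB p N ρ a with hbdef
  have hbpow : ∀ j, 1 ≤ j →
      (b j) ^ p = -a (p * j) + (if p * j ≤ N then b (p * j) else 0) :=
    fun j hj => approxB_pow p N ρ hρ a j hj hp2
  -- main valuation bound on b
  have hbval : ∀ m j, 1 ≤ j → N ≤ j + m →
      ((r0 * ((p * j : ℕ) : ℚ) - δ : ℚ) : WithTop ℚ) ≤ ν (b j) := by
    intro m
    induction m with
    | zero =>
      intro j hj hm
      apply hroot
      rw [hbpow j hj]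
      have h2 : 2 * j ≤ p * j := Nat.mul_le_mul_right j hp2
      rw [if_neg (by omega), add_zero, hneg]
      exact ha (p * j) (by omega)
    | succ m ih =>
      intro j hj hm
      have h2 : 2 * j ≤ p * j := Nat.mul_le_mul_right j hp2
      by_cases hle : p * j ≤ N
      · apply hroot
        rw [hbpow j hj, if_pos hle]
        refine le_trans (le_min ?_ ?_) (hνadd _ _)
        · rw [hneg]; exact ha (p * j) (by omega)
        · refine le_trans ?_ (ih (p * j) (by omega) (by omega))
          apply WithTop.coe_le_coe.mpr
          push_cast
          nlinarith [mul_nonneg (by linarith : (0 : ℚ) ≤ (p : ℚ) - 1) hδ]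
      · apply hroot
        rw [hbpow j hj, if_neg hle, add_zero, hneg]
        exact ha (p * j) (by omega)
  have hbval' : ∀ j, 1 ≤ j →
      ((r0 * ((p * j : ℕ) : ℚ) - δ : ℚ) : WithTop ℚ) ≤ ν (b j) :=
    fun j hj => hbval N j hj (by omega)
  have hbound : ∀ j : ℕ, 1 ≤ j →
      (((p : ℚ) * (r0 * (j : ℚ) - δ) : ℚ) : WithTop ℚ) ≤ ν (b j) := by
    intro j hj
    refine le_trans ?_ (hbval' j hj)
    apply WithTop.coe_le_coe.mpr
    push_cast
    nlinarith [mul_nonneg (by linarith : (0 : ℚ) ≤ (p : ℚ) - 1) hδ]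
  refine ⟨b, fun j hj _ => hbound j hj, ?_, ?_⟩
  · intro k hk
    by_cases hdvd : p ∣ k ∧ k / p ≤ N
    · rw [if_pos hdvd]
      obtain ⟨⟨j, rfl⟩, hle⟩ := hdvd
      have hkdiv : p * j / p = j := Nat.mul_div_cancel_left j hppos
      have hj1 : 1 ≤ j := by
        rcases Nat.eq_zero_or_pos j with h | h
        · subst h; simp at hk
        · exact h
      rw [hkdiv] at hle ⊢
      rw [hbpow j hj1]
      have hz : a (p * j) + (-a (p * j) + (if p * j ≤ N then b (p * j) else 0))
          - (if p * j ≤ N then b (p * j) else 0) = 0 := by ring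
      rw [hz, hν0]
      exact le_top
    · rw [if_neg hdvd, add_zero]
      by_cases hkN : k ≤ N
      · rw [if_pos hkN]
        have hsub : a k - b k = a k + (-b k) := by ring
        rw [hsub]
        refine le_trans (le_min (ha k hk) ?_) (hνadd _ _)
        rw [hneg]
        exact hbound k hk
      · rw [if_neg hkN, sub_zero]
        exact ha k hk
  · intro k hk hkN
    have hkdiv : p * k / p = k := Nat.mul_div_cancel_left k hppos
    rw [if_pos ⟨dvd_mul_right p k, by rw [hkdiv]; exact hkN⟩, hkdiv, hbpow k hk]
    ring
end

section
/- Let L be a field of characteristic p > 0 equipped with an additive valuation ν : L^× → ℚ whose value group is all of ℚ. Let O = {u ∈ L : ν(u) ≥ 0} ∪ {0} be the valuation ring, κ its residue field, and red : O → κ the residue map. Let G ∈ L with ν(G) < 0, and choose π ∈ L with ν(π) = ν(G)/p (so ν(Gπ^{−p}) = 0). Then the following are equivalent: (a) red(Gπ^{−p}) ∈ κ^p := {w^p : w ∈ κ}; (b) there exists a ∈ L with ν(G + a^p − a) > ν(G). Consequently, if red(Gπ^{−p}) ∉ κ^p, then ν(G + a^p − a) ≤ ν(G) for every a ∈ L;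 that is, ν(G) = max_{a ∈ L} ν(G + a^p − a), the maximum over the Artin–Schreier class of G. (Condition (a) does not depend on the choice of π, since changing π multiplies red(Gπ^{−p}) by a nonzero p-th power in κ.) -/
/-- **Maximality of the valuation in an Artin–Schreier class** (Proposition 5.16 of the
paper, valuation-theoretic form): let `L` be a field of characteristic `p > 0` with an
additive valuation `ν` whose value group is all of `ℚ` (with `ν(u) = ∞` iff `u = 0`).
Let `G ∈ L` with `ν(G) < 0` and let `π ∈ L` with `ν(π^p) = ν(G)` (i.e. `ν(π) = ν(G)/p`,
so `ν(G·π^{-p}) = 0`). Then the residue of `G·π^{-p}` in the residue field `κ` of `ν` is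
a `p`-th power (i.e. `G·π^{-p} ≡ w^p` modulo the maximal ideal for some `w` in the
valuation ring) **iff** there is `a ∈ L` with `ν(G + a^p − a) > ν(G)`. Consequently, if
the residue of `G·π^{-p}` is not a `p`-th power in `κ`, then
`ν(G) = max_{a ∈ L} ν(G + a^p − a)`, the maximum over the Artin–Schreier class of `G`. -/
theorem depth_maximal_iff_residue_not_pth_power
    (p : ℕ) [hp : Fact p.Prime] (L : Type) [Field L] [CharP L p]
    (ν : L → WithTop ℚ)
    (hν0 : ∀ u : L, ν u = ⊤ ↔ u = 0)
    (hνmul : ∀ u v : L, ν (u * v) = ν u + ν v)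
    (hνadd : ∀ u v : L, min (ν u) (ν v) ≤ ν (u + v))
    (hνsurj : ∀ q : ℚ, ∃ u : L, ν u = (q : WithTop ℚ))
    (G : L) (hG : ν G < 0)
    (π : L) (hπ : ν (π ^ p) = ν G) :
    ((∃ w : L, 0 ≤ ν w ∧ 0 < ν (G * (π ^ p)⁻¹ - w ^ p)) ↔
        (∃ a : L, ν G < ν (G + a ^ p - a))) ∧
    ((¬ ∃ w : L, 0 ≤ ν w ∧ 0 < ν (G * (π ^ p)⁻¹ - w ^ p)) →
        ∀ a : L, ν (G + a ^ p - a) ≤ ν G) := by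
  have hp2 : 2 ≤ p := hp.out.two_le
  have hppos : 0 < (p : ℚ) := by exact_mod_cast hp.out.pos
  -- basic valuation facts
  have hνne : ∀ u : L, u ≠ 0 → ν u ≠ ⊤ := fun u hu h => hu ((hν0 u).1 h)
  have hval : ∀ u : L, u ≠ 0 → ∃ s : ℚ, ν u = (s : WithTop ℚ) := by
    intro u hu
    obtain ⟨s, hs⟩ := WithTop.ne_top_iff_exists.1 (hνne u hu)
    exact ⟨s, hs.symm⟩
  have hG0 : G ≠ 0 := by
    intro h
    rw [h, (hν0 0).2 rfl] at hG
    exact not_top_lt hG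
  have hν1 : ν 1 = 0 := by
    obtain ⟨s, hs⟩ := hval 1 one_ne_zero
    have h := hνmul 1 1
    rw [one_mul, hs] at h
    have : s = s + s := by exact_mod_cast h
    have : s = 0 := by linarith
    rw [hs, this]; rfl
  have hνm1 : ν (-1) = 0 := by
    obtain ⟨s, hs⟩ := hval (-1) (by norm_num)
    have h := hνmul (-1) (-1)
    rw [neg_mul_neg, one_mul, hν1, hs] at h
    have : (0 : ℚ) = s + s := by exact_mod_cast h
    have : s = 0 := by linarith
    rw [hs, this]; rfl
  have hνneg : ∀ u : L, ν (-u) = ν u := by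
    intro u
    rw [show -u = -1 * u by ring, hνmul, hνm1, zero_add]
  -- min when valuations differ
  have hmin : ∀ u v : L, ν u < ν v → ν (u + v) = ν u := by
    intro u v huv
    refine le_antisymm ?_ ?_
    · have h := hνadd (u + v) (-v)
      rw [add_neg_cancel_right, hνneg] at h
      rcases min_le_iff.1 h with h' | h'
      · exact h'
      · exact absurd (lt_of_lt_of_le huv h') (lt_irrefl _)
    · have h := hνadd u v
      rwa [min_eq_left huv.le] at h
  -- powers
  have hνpow : ∀ (u : L) (s : ℚ), ν u = (s : WithTop ℚ) → ∀ n : ℕ,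
      ν (u ^ n) = ((n * s : ℚ) : WithTop ℚ) := by
    intro u s hs n
    induction n with
    | zero => simpa using hν1
    | succ n ih =>
      rw [pow_succ, hνmul, ih, hs, ← WithTop.coe_add]
      congr 1
      push_cast
      ring
  -- inverse
  have hνinv : ∀ (u : L), u ≠ 0 → ∀ s : ℚ, ν u = (s : WithTop ℚ) →
      ν u⁻¹ = ((-s : ℚ) : WithTop ℚ) := by
    intro u hu s hs
    obtain ⟨t, ht⟩ := hval u⁻¹ (inv_ne_zero hu)
    have h := hνmul u u⁻¹
    rw [mul_inv_cancel₀ hu, hν1, hs, ht] at h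
    have : (0 : ℚ) = s + t := by exact_mod_cast h
    rw [ht]
    norm_cast
    linarith
  -- the values q = ν G, r = ν π
  obtain ⟨q, hq⟩ := hval G hG0
  have hqneg : q < 0 := by
    rw [hq] at hG
    exact_mod_cast hG
  have hπ0 : π ≠ 0 := by
    intro h
    have : ν (π ^ p) = ⊤ := (hν0 _).2 (by rw [h, zero_pow hp.out.ne_zero])
    rw [hπ, hq] at this
    exact WithTop.coe_ne_top this
  obtain ⟨r, hr⟩ := hval π hπ0
  have hpr : (p : ℚ) * r = q := by
    have := (hνpow π r hr p).symm.trans (hπ.trans hq)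
    exact_mod_cast this
  have hp2q : (2 : ℚ) ≤ (p : ℚ) := by exact_mod_cast hp2
  have hrneg : r < 0 := by nlinarith
  have hqr : q < r := by nlinarith [mul_le_mul_of_nonpos_right hp2q hrneg.le]
  have hπp0 : π ^ p ≠ 0 := pow_ne_zero _ hπ0
  have hπpval : ν (π ^ p) = (q : WithTop ℚ) := hπ.trans hq
  have hπpinv : ν ((π ^ p)⁻¹) = ((-q : ℚ) : WithTop ℚ) := hνinv _ hπp0 q hπpval
  -- the main equivalence
  have main : (∃ w : L, 0 ≤ ν w ∧ 0 < ν (G * (π ^ p)⁻¹ - w ^ p)) ↔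
      (∃ a : L, ν G < ν (G + a ^ p - a)) := by
    constructor
    · rintro ⟨w, hw0, hwpos⟩
      refine ⟨-(w * π), ?_⟩
      have hnegpow : (-(w * π)) ^ p = -((w * π) ^ p) := by
        rw [show -(w * π) = 0 - w * π by ring, sub_pow_char,
          zero_pow hp.out.ne_zero, zero_sub]
      have hid : G + (-(w * π)) ^ p - (-(w * π)) = (G - w ^ p * π ^ p) + w * π := by
        rw [hnegpow, mul_pow]; ring
      have hkey : G - w ^ p * π ^ p = π ^ p * (G * (π ^ p)⁻¹ - w ^ p) := by
        field_simp
      have hA : (q : WithTop ℚ) < ν (G - w ^ p * π ^ p) := by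
        rw [hkey, hνmul, hπpval]
        calc (q : WithTop ℚ) = (q : WithTop ℚ) + 0 := by rw [add_zero]
        _ < (q : WithTop ℚ) + ν (G * (π ^ p)⁻¹ - w ^ p) :=
            WithTop.add_lt_add_left (WithTop.coe_ne_top) hwpos
      have hB : (q : WithTop ℚ) < ν (w * π) := by
        rw [hνmul, hr]
        calc (q : WithTop ℚ) < (r : WithTop ℚ) := by exact_mod_cast hqr
        _ = 0 + (r : WithTop ℚ) := by rw [zero_add]
        _ ≤ ν w + (r : WithTop ℚ) := add_le_add_left hw0 _
      rw [hid, hq]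
      exact lt_of_lt_of_le (lt_min hA hB) (hνadd _ _)
    · rintro ⟨a, ha⟩
      have ha0 : a ≠ 0 := by
        intro h
        rw [h] at ha
        simp only [ne_eq, zero_pow hp.out.ne_zero, add_zero, sub_zero] at ha
        exact lt_irrefl _ ha
      obtain ⟨s, hs⟩ := hval a ha0
      -- ν (a^p - a) = q
      have hFG : ν (a ^ p - a) = (q : WithTop ℚ) := by
        have : a ^ p - a = -G + (G + a ^ p - a) := by ring
        rw [this, hmin _ _ (by rw [hνneg, hq]; rw [hq] at ha; exact ha), hνneg, hq]
      have hspow : ν (a ^ p) = (((p : ℚ) * s : ℚ) : WithTop ℚ) := hνpow a s hs p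
      have hsneg : s < 0 := by
        by_contra h
        push_neg at h
        have h1 := hνadd (a ^ p) (-a)
        rw [show a ^ p + -a = a ^ p - a by ring, hFG, hspow, hνneg, hs] at h1
        have h2 : min ((p : ℚ) * s) s ≤ q := by exact_mod_cast h1
        rcases min_le_iff.1 (le_refl (min ((p:ℚ)*s) s)) with _ | _ <;>
          · have hm : min ((p : ℚ) * s) s ≥ 0 := le_min (by positivity) h
            linarith
      have hps : (p : ℚ) * s = q := by
        have hlt : ν (a ^ p) < ν (-a) := by
          rw [hspow, hνneg, hs]
          exact_mod_cast (by nlinarith : (p : ℚ) * s < s)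
        have := hmin _ _ hlt
        rw [show a ^ p + -a = a ^ p - a by ring, hFG, hspow] at this
        exact_mod_cast this.symm
      have hsr : s = r := by
        have : (p : ℚ) * s = (p : ℚ) * r := by rw [hps, hpr]
        exact mul_left_cancel₀ (ne_of_gt hppos) this
      refine ⟨-(a * π⁻¹), ?_, ?_⟩
      · have : ν (-(a * π⁻¹)) = ((s + -r : ℚ) : WithTop ℚ) := by
          rw [hνneg, hνmul, hs, hνinv π hπ0 r hr, ← WithTop.coe_add]
        rw [this, hsr]
        exact_mod_cast (by linarith : (0 : ℚ) ≤ r + -r)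
      · have hwp : (-(a * π⁻¹)) ^ p = -(a ^ p * (π ^ p)⁻¹) := by
          rw [show -(a * π⁻¹) = 0 - a * π⁻¹ by ring, sub_pow_char,
            zero_pow hp.out.ne_zero, zero_sub, mul_pow, inv_pow]
        have hid : G * (π ^ p)⁻¹ - (-(a * π⁻¹)) ^ p =
            (G + a ^ p - a) * (π ^ p)⁻¹ + a * (π ^ p)⁻¹ := by
          rw [hwp]; ring
        have hA : (0 : WithTop ℚ) < ν ((G + a ^ p - a) * (π ^ p)⁻¹) := by
          rw [hνmul, hπpinv]
          calc (0 : WithTop ℚ) = ((q + -q : ℚ) : WithTop ℚ) := by norm_cast; ring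
          _ = (q : WithTop ℚ) + ((-q : ℚ) : WithTop ℚ) := by rw [WithTop.coe_add]
          _ < ν (G + a ^ p - a) + ((-q : ℚ) : WithTop ℚ) := by
              refine WithTop.add_lt_add_right WithTop.coe_ne_top ?_
              rw [hq] at ha; exact ha
        have hB : (0 : WithTop ℚ) < ν (a * (π ^ p)⁻¹) := by
          rw [hνmul, hs, hπpinv, ← WithTop.coe_add]
          exact_mod_cast (by rw [hsr]; linarith : (0 : ℚ) < s + -q)
        rw [hid]
        exact lt_of_lt_of_le (lt_min hA hB) (hνadd _ _)
  refine ⟨main, fun h a => ?_⟩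
  by_contra h'
  push_neg at h'
  exact h (main.2 ⟨a, h'⟩)
end

section
/- Let p be a prime, k a perfect field of characteristic p, c ∈ k, and let d_1, …, d_r ∈ k (r ≥ 2) be pairwise distinct. Let ι_1, …, ι_r be positive integers, let a be an integer with 1 ≤ a ≤ p − 1, and set ι'_1 := pι_1 − p + a + 1, ι'_2 := pι_2 − p + 1, and ι'_i := pι_i for 3 ≤ i ≤ r. Then in the rational function field k(x) there exist unique g_0, …, g_{p−1} ∈ k(x) with c^p / ((d_2 − d_1)^{p−a−1} ∏_{i=1}^r (x − d_i)^{ι'_i}) = Σ_{j=0}^{p−1} g_j^p x^j, and moreover g_{p−1} = c / ∏_{i=1}^r (x − d_i)^{ι_i}. Equivalently, the Cartier operator on Ω^1_{k(x)} sends ω' := c^p dx / ((d_2 − d_1)^{p−a−1} ∏_{i=1}^r (x − d_i)^{ι'_i}) to ω := c dx / ∏_{i=1}^r (x − d_i)^{ι_i}. -/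
open Polynomial
open scoped BigOperators

section Aux



variable {p : ℕ} [hp : Fact p.Prime] {k : Type} [Field k] [CharP k p] [PerfectField k]

lemma coeff_pow_char' (f : k[X]) (m : ℕ) :
    (f ^ p).coeff m = if p ∣ m then (f.coeff (m / p)) ^ p else 0 := by
  rw [← Polynomial.map_frobenius_expand (p := p) f, Polynomial.coeff_map,
    Polynomial.coeff_expand hp.out.pos, apply_ite (frobenius k p), map_zero, frobenius_def]

lemma nat_aux {p q i j : ℕ} (hq : p ∣ q) (hi : i < p) (hj : j < p) (hle : i ≤ q + j)
    (hdvd : p ∣ (q + j - i)) : i = j := by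
  rcases le_or_gt i j with h | h
  · have h1 : q + j - i = q + (j - i) := by omega
    rw [h1] at hdvd
    have h2 : p ∣ (j - i) := (Nat.dvd_add_right hq).mp hdvd
    have := Nat.eq_zero_of_dvd_of_lt h2
    omega
  · have h2 : p ∣ (i - j) := by
      have h3 := Nat.dvd_sub hq hdvd
      have h4 : q - (q + j - i) = i - j := by omega
      rwa [h4] at h3
    have := Nat.eq_zero_of_dvd_of_lt h2
    omega

lemma key_coeff (h : Fin p → k[X]) (n : ℕ) (j : Fin p) :
    (∑ i : Fin p, h i ^ p * X ^ (i : ℕ)).coeff (p * n + j) = ((h j).coeff n) ^ p := by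
  rw [Polynomial.finset_sum_coeff]
  rw [Finset.sum_eq_single j]
  · rw [Polynomial.coeff_mul_X_pow', if_pos (by omega), coeff_pow_char',
      show p * n + (j : ℕ) - j = p * n by omega, if_pos (dvd_mul_right p n),
      Nat.mul_div_cancel_left n hp.out.pos]
  · intro i _ hij
    rw [Polynomial.coeff_mul_X_pow']
    split_ifs with hle
    · rw [coeff_pow_char', if_neg]
      intro hdvd
      exact hij (Fin.ext (nat_aux (dvd_mul_right p n) i.isLt j.isLt hle hdvd))
    · rfl
  · intro hj; exact absurd (Finset.mem_univ j) hj

lemma poly_unique {h h' : Fin p → k[X]}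
    (heq : (∑ i : Fin p, h i ^ p * X ^ (i : ℕ)) = ∑ i : Fin p, h' i ^ p * X ^ (i : ℕ)) :
    h = h' := by
  funext j
  ext n
  have := congrArg (fun q : k[X] => q.coeff (p * n + j)) heq
  simp only [key_coeff] at this
  have hfr : frobenius k p ((h j).coeff n) = frobenius k p ((h' j).coeff n) := by
    rwa [frobenius_def, frobenius_def]
  exact frobenius_inj k p hfr

lemma poly_exists (P : k[X]) :
    ∃ h : Fin p → k[X], (∑ i : Fin p, h i ^ p * X ^ (i : ℕ)) = P := by
  set N := P.natDegree + 1 with hN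
  refine ⟨fun j => ∑ n ∈ Finset.range N, Polynomial.monomial n
    ((frobeniusEquiv k p).symm (P.coeff (p * n + j))), ?_⟩
  have hcoeff : ∀ (j : Fin p) (n : ℕ),
      (∑ m ∈ Finset.range N, Polynomial.monomial m
        ((frobeniusEquiv k p).symm (P.coeff (p * m + j)))).coeff n =
      if n < N then (frobeniusEquiv k p).symm (P.coeff (p * n + j)) else 0 := by
    intro j n
    rw [Polynomial.finset_sum_coeff]
    simp only [Polynomial.coeff_monomial]
    rw [Finset.sum_ite_eq' (Finset.range N) n]
    simp [Finset.mem_range]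
  ext m
  have hm : m = p * (m / p) + m % p := (Nat.div_add_mod m p).symm
  have hmp : m % p < p := Nat.mod_lt _ hp.out.pos
  rw [hm, key_coeff _ (m / p) ⟨m % p, hmp⟩, hcoeff]
  split_ifs with hlt
  · have : ((frobeniusEquiv k p).symm (P.coeff (p * (m / p) + m % p))) ^ p
        = P.coeff (p * (m / p) + m % p) := by
      have := (frobeniusEquiv k p).apply_symm_apply (P.coeff (p * (m / p) + m % p))
      rwa [frobeniusEquiv_apply, frobenius_def] at this
    simpa using this
  · rw [zero_pow hp.out.ne_zero]
    have : P.natDegree < p * (m / p) + m % p := by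
      have h1 : N ≤ m / p := by omega
      have h2 : m / p ≤ m := Nat.div_le_self m p
      omega
    rw [Polynomial.coeff_eq_zero_of_natDegree_lt this]

lemma ratfunc_exists (F : RatFunc k) :
    ∃ g : Fin p → RatFunc k, F = ∑ j : Fin p, g j ^ p * RatFunc.X ^ (j : ℕ) := by
  obtain ⟨h, hh⟩ := poly_exists (p := p) (F.num * F.denom ^ (p - 1))
  set aB : RatFunc k := algebraMap k[X] (RatFunc k) F.denom with haB
  have hB : aB ≠ 0 := by
    simpa [haB] using (RatFunc.algebraMap_ne_zero (RatFunc.denom_ne_zero F))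
  refine ⟨fun j => algebraMap k[X] (RatFunc k) (h j) / aB, ?_⟩
  have h1 : ∑ j : Fin p, (algebraMap k[X] (RatFunc k) (h j) / aB) ^ p * RatFunc.X ^ (j : ℕ)
      = algebraMap k[X] (RatFunc k) (F.num * F.denom ^ (p - 1)) / aB ^ p := by
    rw [← hh, map_sum]
    simp only [map_mul, map_pow, RatFunc.algebraMap_X, div_pow, div_mul_eq_mul_div]
    rw [← Finset.sum_div]
  rw [h1, map_mul, map_pow, ← haB]
  have hp1 : aB ^ p = aB ^ (p - 1) * aB := by
    rw [← pow_succ]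
    congr 1
    have := hp.out.pos
    omega
  rw [hp1, ← div_div, mul_div_assoc, div_self (pow_ne_zero _ hB), mul_one,
    RatFunc.num_div_denom]

lemma ratfunc_unique {g g' : Fin p → RatFunc k}
    (heq : ∑ j : Fin p, g j ^ p * RatFunc.X ^ (j : ℕ)
      = ∑ j : Fin p, g' j ^ p * RatFunc.X ^ (j : ℕ)) : g = g' := by
  haveI : CharP (RatFunc k) p :=
    charP_of_injective_algebraMap (algebraMap k (RatFunc k)).injective p
  set e : Fin p → RatFunc k := fun j => g j - g' j with he
  have h0 : ∑ j : Fin p, e j ^ p * RatFunc.X ^ (j : ℕ) = 0 := by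
    simp only [he, sub_pow_char, sub_mul]
    rw [Finset.sum_sub_distrib, heq, sub_self]
  set B : k[X] := ∏ i : Fin p, (e i).denom with hBdef
  have hBne : B ≠ 0 := Finset.prod_ne_zero_iff.mpr fun i _ => RatFunc.denom_ne_zero _
  set A : Fin p → k[X] := fun j => (e j).num * ∏ i ∈ Finset.univ.erase j, (e i).denom with hA
  have hAe : ∀ j, algebraMap k[X] (RatFunc k) (A j) = e j * algebraMap k[X] (RatFunc k) B := by
    intro j
    have hprod : B = (e j).denom * ∏ i ∈ Finset.univ.erase j, (e i).denom :=
      (Finset.mul_prod_erase Finset.univ _ (Finset.mem_univ j)).symm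
    rw [hA, hprod, map_mul, map_mul]
    have : e j * algebraMap k[X] (RatFunc k) (e j).denom = algebraMap k[X] (RatFunc k) (e j).num := by
      exact (eq_div_iff (RatFunc.algebraMap_ne_zero (RatFunc.denom_ne_zero (e j)))).mp
        (RatFunc.num_div_denom (e j)).symm
    rw [← mul_assoc, this]
  have hsum : algebraMap k[X] (RatFunc k) (∑ j : Fin p, A j ^ p * Polynomial.X ^ (j : ℕ)) = 0 := by
    rw [map_sum]
    simp only [map_mul, map_pow, RatFunc.algebraMap_X, hAe, mul_pow]
    calc ∑ j : Fin p, e j ^ p * (algebraMap k[X] (RatFunc k) B) ^ p * RatFunc.X ^ (j : ℕ)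
        = (∑ j : Fin p, e j ^ p * RatFunc.X ^ (j : ℕ)) * (algebraMap k[X] (RatFunc k) B) ^ p := by
          rw [Finset.sum_mul]; congr 1; funext j; ring
      _ = 0 := by rw [h0, zero_mul]
  have hA0 : ∀ j, A j = 0 := by
    have hz : (∑ j : Fin p, A j ^ p * Polynomial.X ^ (j : ℕ)) = (0 : k[X]) :=
      RatFunc.algebraMap_injective k (by rw [hsum, map_zero])
    have hz' : (∑ j : Fin p, A j ^ p * Polynomial.X ^ (j : ℕ))
        = ∑ j : Fin p, (fun _ : Fin p => (0 : k[X])) j ^ p * Polynomial.X ^ (j : ℕ) := by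
      rw [hz]
      simp [zero_pow hp.out.ne_zero]
    intro j
    exact congrFun (poly_unique hz') j
  funext j
  have : e j * algebraMap k[X] (RatFunc k) B = 0 := by rw [← hAe, hA0, map_zero]
  have heB := (mul_eq_zero.mp this).resolve_right (RatFunc.algebraMap_ne_zero hBne)
  have : g j - g' j = 0 := heB
  exact sub_eq_zero.mp this

lemma geom_expand (d1 : k) :
    (X - C d1) ^ (p - 1) = ∑ i ∈ Finset.range p, C (d1 ^ (p - 1 - i)) * X ^ i := by
  apply mul_right_cancel₀ (Polynomial.X_sub_C_ne_zero d1)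
  rw [← pow_succ, show p - 1 + 1 = p by have := hp.out.pos; omega, sub_pow_char]
  have hg := geom_sum₂_mul (Polynomial.X : k[X]) (C d1) p
  calc Polynomial.X ^ p - C d1 ^ p
      = (∑ i ∈ Finset.range p, Polynomial.X ^ i * C d1 ^ (p - 1 - i)) * (X - C d1) := hg.symm
    _ = (∑ i ∈ Finset.range p, C (d1 ^ (p - 1 - i)) * X ^ i) * (X - C d1) := by
        congr 1
        refine Finset.sum_congr rfl fun i _ => ?_
        rw [← map_pow, mul_comm]

lemma geom_coeff (d1 : k) {j : ℕ} (hj : j < p) :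
    ((X - C d1) ^ (p - 1)).coeff j = d1 ^ (p - 1 - j) := by
  rw [geom_expand, Polynomial.finset_sum_coeff]
  simp only [Polynomial.coeff_C_mul, Polynomial.coeff_X_pow, mul_ite, mul_one, mul_zero]
  rw [Finset.sum_ite_eq (Finset.range p) j]
  rw [if_pos (Finset.mem_range.mpr hj)]

lemma coeff_aux (d0 d1 : k) (n1 : ℕ) (hn1 : n1 + 1 ≤ p) :
    ((X - C d0) ^ n1 * (X - C d1) ^ (p - 1)).coeff (p - 1) = (d1 - d0) ^ n1 := by
  have hp1 : 1 ≤ p := hp.out.pos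
  rw [Polynomial.coeff_mul, Finset.Nat.sum_antidiagonal_eq_sum_range_succ_mk]
  have hcoe : ∀ i ∈ Finset.range (p - 1).succ,
      ((X - C d0) ^ n1).coeff i * ((X - C d1) ^ (p - 1)).coeff (p - 1 - i)
        = d1 ^ i * (-d0) ^ (n1 - i) * (n1.choose i : k) := by
    intro i hi
    have hi' : i ≤ p - 1 := by simpa [Nat.lt_succ_iff] using hi
    rw [show (X - C d0 : k[X]) = X + C (-d0) by rw [map_neg, sub_eq_add_neg],
      Polynomial.coeff_X_add_C_pow, geom_coeff d1 (by omega),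
      show p - 1 - (p - 1 - i) = i by omega]
    ring
  rw [Finset.sum_congr rfl hcoe]
  have hsub : Finset.range (n1 + 1) ⊆ Finset.range (p - 1).succ := by
    intro x hx
    simp only [Finset.mem_range] at *
    omega
  rw [← Finset.sum_subset hsub (by
    intro x _ hx
    simp only [Finset.mem_range, not_lt] at hx
    rw [Nat.choose_eq_zero_of_lt (by omega), Nat.cast_zero, mul_zero])]
  rw [show d1 - d0 = d1 + (-d0) by ring, add_pow]

end Aux


private lemma nat2 {p a m : ℕ} (h1 : 1 ≤ a) (h2 : a ≤ p - 1) (h3 : 2 ≤ p) (h4 : p ≤ m) :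
    m = (m - p + a + 1) + (p - a - 1) := by omega

private lemma nat3 {p m : ℕ} (h3 : 2 ≤ p) (h4 : p ≤ m) :
    m = (m - p + 1) + (p - 1) := by omega

/-- **An explicit solution of the Cartier operator equation** (Proposition 6.1 of the
paper): let `k` be a perfect field of characteristic `p`, `c ∈ k`, and `d_1, …, d_r ∈ k`
(`r ≥ 2`) pairwise distinct. Let `ι_1, …, ι_r` be positive integers, `1 ≤ a ≤ p − 1`, and
set `ι'_1 = pι_1 − p + a + 1`, `ι'_2 = pι_2 − p + 1`, `ι'_i = pι_i` for `i ≥ 3`. Then in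
`k(x)` there exist unique `g_0, …, g_{p−1}` with
`c^p / ((d_2 − d_1)^{p−a−1} ∏ (x − d_i)^{ι'_i}) = Σ_{j=0}^{p−1} g_j^p x^j`,
and moreover `g_{p−1} = c / ∏ (x − d_i)^{ι_i}`; i.e. the Cartier operator sends
`ω' = c^p dx / ((d_2 − d_1)^{p−a−1} ∏ (x − d_i)^{ι'_i})` to
`ω = c dx / ∏ (x − d_i)^{ι_i}`. -/
theorem cartier_equation_solution
    (p : ℕ) [hp : Fact p.Prime] (k : Type) [Field k] [CharP k p] [PerfectField k]
    (c : k) (r : ℕ) (hr : 2 ≤ r)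
    (d : Fin r → k) (hd : Function.Injective d)
    (ι : Fin r → ℕ) (hι : ∀ i, 0 < ι i)
    (a : ℕ) (ha1 : 1 ≤ a) (ha2 : a ≤ p - 1)
    (ι' : Fin r → ℕ)
    (hι'0 : ι' ⟨0, by omega⟩ = p * ι ⟨0, by omega⟩ - p + a + 1)
    (hι'1 : ι' ⟨1, by omega⟩ = p * ι ⟨1, by omega⟩ - p + 1)
    (hι'rest : ∀ i : Fin r, (i : ℕ) ≠ 0 → (i : ℕ) ≠ 1 → ι' i = p * ι i) :
    (∃! g : Fin p → RatFunc k,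
        (RatFunc.C c) ^ p /
            ((RatFunc.C (d ⟨1, by omega⟩ - d ⟨0, by omega⟩)) ^ (p - a - 1) *
              ∏ i : Fin r, (RatFunc.X - RatFunc.C (d i)) ^ (ι' i)) =
          ∑ j : Fin p, (g j) ^ p * RatFunc.X ^ (j : ℕ)) ∧
    (∀ g : Fin p → RatFunc k,
        (RatFunc.C c) ^ p /
            ((RatFunc.C (d ⟨1, by omega⟩ - d ⟨0, by omega⟩)) ^ (p - a - 1) *
              ∏ i : Fin r, (RatFunc.X - RatFunc.C (d i)) ^ (ι' i)) =
          ∑ j : Fin p, (g j) ^ p * RatFunc.X ^ (j : ℕ) →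
        g ⟨p - 1, Nat.sub_lt hp.out.pos Nat.one_pos⟩ =
          RatFunc.C c / ∏ i : Fin r, (RatFunc.X - RatFunc.C (d i)) ^ (ι i)) := by
  haveI : CharP (RatFunc k) p :=
    charP_of_injective_algebraMap (algebraMap k (RatFunc k)).injective p
  have hp2 : 2 ≤ p := hp.out.two_le
  have hr0 : (0 : ℕ) < r := by omega
  have hr1 : (1 : ℕ) < r := by omega
  set i0 : Fin r := ⟨0, hr0⟩ with hi0def
  set i1 : Fin r := ⟨1, hr1⟩ with hi1def
  have hι'0' : ι' i0 = p * ι i0 - p + a + 1 := hι'0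
  have hι'1' : ι' i1 = p * ι i1 - p + 1 := hι'1
  have hne01 : i0 ≠ i1 := by
    intro hcon
    have := congrArg Fin.val hcon
    simp [hi0def, hi1def] at this
  have hΔ : d i1 - d i0 ≠ 0 := sub_ne_zero.mpr fun hcon => hne01 (hd hcon).symm
  set n1 : ℕ := p - a - 1 with hn1def
  have hn1p : n1 + 1 ≤ p := by omega
  set e : k := (frobeniusEquiv k p).symm ((d i1 - d i0) ^ n1) with hedef
  have he : e ^ p = (d i1 - d i0) ^ n1 := by
    have := (frobeniusEquiv k p).apply_symm_apply ((d i1 - d i0) ^ n1)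
    rwa [frobeniusEquiv_apply, frobenius_def] at this
  have he0 : e ≠ 0 := by
    intro hcon
    rw [hcon, zero_pow hp.out.ne_zero] at he
    exact pow_ne_zero n1 hΔ he.symm
  -- polynomial decomposition of H₀
  set H₀ : k[X] := (X - Polynomial.C (d i0)) ^ n1 * (X - Polynomial.C (d i1)) ^ (p - 1)
    with hH₀def
  obtain ⟨h, hh⟩ := poly_exists (p := p) H₀
  have hHdeg : H₀.natDegree < 2 * p - 1 := by
    have h1 : H₀.natDegree ≤ n1 + (p - 1) := by
      calc H₀.natDegree ≤ ((X - Polynomial.C (d i0)) ^ n1).natDegree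
            + ((X - Polynomial.C (d i1)) ^ (p - 1)).natDegree := Polynomial.natDegree_mul_le
        _ = n1 + (p - 1) := by
            rw [Polynomial.natDegree_pow, Polynomial.natDegree_pow,
              Polynomial.natDegree_X_sub_C, Polynomial.natDegree_X_sub_C, mul_one, mul_one]
    omega
  have hple : p - 1 < p := by omega
  have hlast : h ⟨p - 1, hple⟩ = Polynomial.C e := by
    ext n
    have hfp : ((h ⟨p - 1, hple⟩).coeff n) ^ p = ((Polynomial.C e).coeff n) ^ p := by
      rw [← key_coeff h n ⟨p - 1, hple⟩, hh,
        show ((⟨p - 1, hple⟩ : Fin p) : ℕ) = p - 1 from rfl]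
      cases n with
      | zero =>
        rw [Nat.mul_zero, Nat.zero_add, hH₀def, coeff_aux (d i0) (d i1) n1 hn1p,
          Polynomial.coeff_C, if_pos rfl, ← he]
      | succ m =>
        obtain ⟨q, hq1, hq2⟩ : ∃ q, q = p * (m + 1) ∧ p ≤ q :=
          ⟨_, rfl, Nat.le_mul_of_pos_right p (Nat.succ_pos m)⟩
        rw [← hq1, Polynomial.coeff_eq_zero_of_natDegree_lt (by omega),
          Polynomial.coeff_C, if_neg (by omega), zero_pow hp.out.ne_zero]
    exact frobenius_inj k p (by rw [frobenius_def, frobenius_def]; exact hfp)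
  -- RatFunc objects
  set f : Fin r → RatFunc k := fun i => RatFunc.X - RatFunc.C (d i) with hfdef
  have hmapf : ∀ i, algebraMap k[X] (RatFunc k) (X - Polynomial.C (d i)) = f i := by
    intro i
    rw [map_sub, RatFunc.algebraMap_X, RatFunc.algebraMap_C]
  have hf0 : ∀ i, f i ≠ 0 := by
    intro i
    rw [← hmapf]
    exact RatFunc.algebraMap_ne_zero (Polynomial.X_sub_C_ne_zero (d i))
  set D : RatFunc k := ∏ i : Fin r, f i ^ ι i with hDdef
  set P' : RatFunc k := ∏ i : Fin r, f i ^ ι' i with hP'def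
  set HH : RatFunc k := f i0 ^ n1 * f i1 ^ (p - 1) with hHHdef
  have hD0 : D ≠ 0 := Finset.prod_ne_zero_iff.mpr fun i _ => pow_ne_zero _ (hf0 i)
  have hP'0 : P' ≠ 0 := Finset.prod_ne_zero_iff.mpr fun i _ => pow_ne_zero _ (hf0 i)
  have hHH0 : HH ≠ 0 := mul_ne_zero (pow_ne_zero _ (hf0 i0)) (pow_ne_zero _ (hf0 i1))
  have hCinj : Function.Injective (RatFunc.C : k →+* RatFunc k) := RingHom.injective (RatFunc.C : k →+* RatFunc k)
  have hCe0 : RatFunc.C e ≠ 0 := fun hcon => he0 (hCinj (by rw [hcon, map_zero]))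
  have hCΔ0 : (RatFunc.C (d i1 - d i0)) ^ n1 ≠ 0 :=
    pow_ne_zero _ fun hcon => hΔ (hCinj (by rw [hcon, map_zero]))
  -- product identity
  have hDp : P' * HH = D ^ p := by
    set cex : Fin r → ℕ := fun i => if i = i0 then n1 else if i = i1 then p - 1 else 0
      with hcexdef
    have hsplit : ∀ i, p * ι i = ι' i + cex i := by
      intro i
      by_cases h0 : i = i0
      · subst h0
        have hc : cex i0 = n1 := by simp [hcexdef]
        rw [hc, hι'0']
        exact nat2 ha1 ha2 hp2 (Nat.le_mul_of_pos_right p (hι i0))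
      · by_cases h1 : i = i1
        · subst h1
          have hc : cex i1 = p - 1 := by simp [hcexdef, h0]
          rw [hc, hι'1']
          exact nat3 hp2 (Nat.le_mul_of_pos_right p (hι i1))
        · have hc : cex i = 0 := by simp [hcexdef, h0, h1]
          rw [hc,
            hι'rest i (by simpa [hi0def, Fin.ext_iff] using h0)
              (by simpa [hi1def, Fin.ext_iff] using h1), Nat.add_zero]
    have hprodcex : (∏ i : Fin r, f i ^ cex i) = HH := by
      rw [← Finset.mul_prod_erase Finset.univ _ (Finset.mem_univ i0),
        ← Finset.mul_prod_erase _ _ (Finset.mem_erase.mpr ⟨Ne.symm hne01, Finset.mem_univ i1⟩)]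
      have hrest : (∏ i ∈ (Finset.univ.erase i0).erase i1, f i ^ cex i) = 1 := by
        apply Finset.prod_eq_one
        intro i hi
        obtain ⟨hi1', hi0'⟩ := Finset.mem_erase.mp hi
        obtain ⟨hi0'', _⟩ := Finset.mem_erase.mp hi0'
        have hc : cex i = 0 := by simp [hcexdef, hi0'', hi1']
        rw [hc]
        exact pow_zero _
      have hc0 : cex i0 = n1 := by simp [hcexdef]
      have hc1 : cex i1 = p - 1 := by
        have h10 : ¬ i1 = i0 := fun hcon => hne01 hcon.symm
        simp [hcexdef, h10]
      rw [hrest, mul_one, hHHdef, hc0, hc1]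
    calc P' * HH = (∏ i : Fin r, f i ^ ι' i) * ∏ i : Fin r, f i ^ cex i := by
          rw [hprodcex, hP'def]
      _ = ∏ i : Fin r, (f i ^ ι' i * f i ^ cex i) := (Finset.prod_mul_distrib).symm
      _ = ∏ i : Fin r, f i ^ (p * ι i) := by
          refine Finset.prod_congr rfl fun i _ => ?_
          rw [← pow_add, ← hsplit i]
      _ = D ^ p := by
          rw [hDdef, ← Finset.prod_pow]
          refine Finset.prod_congr rfl fun i _ => ?_
          rw [← pow_mul, mul_comm p (ι i)]
  have hHmap : algebraMap k[X] (RatFunc k) H₀ = HH := by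
    rw [hH₀def, map_mul, map_pow, map_pow, hmapf, hmapf, hHHdef]
  -- the explicit solution
  set gstar : Fin p → RatFunc k :=
    fun j => algebraMap k[X] (RatFunc k) (h j) * (RatFunc.C c / (RatFunc.C e * D))
    with hgstardef
  have hkey : (RatFunc.C c) ^ p / ((RatFunc.C (d i1 - d i0)) ^ n1 * P') =
      ∑ j : Fin p, (gstar j) ^ p * RatFunc.X ^ (j : ℕ) := by
    have hsum : ∑ j : Fin p, (gstar j) ^ p * RatFunc.X ^ (j : ℕ)
        = (∑ j : Fin p, (algebraMap k[X] (RatFunc k) (h j)) ^ p * RatFunc.X ^ (j : ℕ))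
          * (RatFunc.C c / (RatFunc.C e * D)) ^ p := by
      rw [Finset.sum_mul]
      refine Finset.sum_congr rfl fun j _ => ?_
      simp only [hgstardef]
      ring
    have hmapsum : (∑ j : Fin p, (algebraMap k[X] (RatFunc k) (h j)) ^ p * RatFunc.X ^ (j : ℕ))
        = HH := by
      rw [← hHmap, ← hh, map_sum]
      simp only [map_mul, map_pow, RatFunc.algebraMap_X]
    have hCep : (RatFunc.C e) ^ p = (RatFunc.C (d i1 - d i0)) ^ n1 := by
      rw [← map_pow, he, map_pow]
    rw [hsum, hmapsum, div_pow, mul_pow, hCep, ← hDp,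
      show (RatFunc.C (d i1 - d i0)) ^ n1 * (P' * HH)
        = ((RatFunc.C (d i1 - d i0)) ^ n1 * P') * HH by ring,
      mul_comm HH, div_mul_eq_mul_div, mul_div_mul_right _ _ hHH0]
  have hgstarlast : gstar ⟨p - 1, hple⟩ = RatFunc.C c / D := by
    simp only [hgstardef]
    rw [hlast, RatFunc.algebraMap_C, mul_comm (RatFunc.C e) D, mul_comm (RatFunc.C e),
      div_mul_eq_mul_div, mul_div_mul_right _ _ hCe0]
  constructor
  · refine ⟨gstar, hkey, ?_⟩
    intro y hy
    exact ratfunc_unique (hy.symm.trans hkey)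
  · intro g hg
    have hgg : g = gstar := ratfunc_unique (hg.symm.trans hkey)
    rw [hgg]
    exact hgstarlast
end

section
/- Let p be a prime and K a field equipped with an additive valuation ν : K → ℚ ∪ {∞}. Let r_0, s, δ ∈ ℚ with 0 < s < r_0 and δ ≥ 0, and let N be a positive integer with pN(r_0 − s) ≥ δ. Let (c_k)_{k ≥ 1} be elements of K satisfying ν(c_k) ≥ p(r_0·k − δ) for all k ≥ 1, and c_{pk} = 0 for all 1 ≤ k ≤ N. Then for every rational r with 0 < r ≤ s and every k ≥ 1 with ν(c_k) < p·r·k, the index k is prime to p. In particular, any index at which the infimum of (ν(c_k) − p·r·k)_{k ≥ 1} is attained with a negative value is prime to p. -/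
/-- **Prime-to-`p` dominance of coefficients** (key step of Proposition 5.19 of the
paper): let `K` be a field with an additive valuation `ν : K → ℚ ∪ {∞}`, let
`0 < s < r₀` be rationals, `δ ≥ 0`, and `N ≥ 1` an integer with `pN(r₀ − s) ≥ δ`. If
`(c_k)_{k ≥ 1}` are elements of `K` with `ν(c_k) ≥ p(r₀·k − δ)` for all `k ≥ 1` and
`c_{pk} = 0` for `1 ≤ k ≤ N`, then for every rational `0 < r ≤ s` and every `k ≥ 1` with
`ν(c_k) < p·r·k`, the index `k` is prime to `p`. -/
theorem dominant_index_prime_to_p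
    (p : ℕ) [hp : Fact p.Prime] (K : Type) [Field K]
    (ν : K → WithTop ℚ)
    (hν0 : ν 0 = ⊤)
    (hνmul : ∀ u v : K, ν (u * v) = ν u + ν v)
    (hνadd : ∀ u v : K, min (ν u) (ν v) ≤ ν (u + v))
    (r0 s δ : ℚ) (hs0 : 0 < s) (hsr0 : s < r0) (hδ : 0 ≤ δ)
    (N : ℕ) (hN : 1 ≤ N) (hNbound : δ ≤ (p : ℚ) * N * (r0 - s))
    (c : ℕ → K)
    (hc : ∀ k : ℕ, 1 ≤ k →
      (((p : ℚ) * (r0 * (k : ℚ) - δ) : ℚ) : WithTop ℚ) ≤ ν (c k))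
    (hczero : ∀ k : ℕ, 1 ≤ k → k ≤ N → c (p * k) = 0) :
    ∀ r : ℚ, 0 < r → r ≤ s → ∀ k : ℕ, 1 ≤ k →
      ν (c k) < (((p : ℚ) * (r * (k : ℚ)) : ℚ) : WithTop ℚ) → Nat.Coprime k p := by
  intro r hr hrs k hk hlt
  rw [Nat.coprime_comm]
  rw [(hp.out).coprime_iff_not_dvd]
  rintro ⟨m, rfl⟩
  have hp1 : 1 ≤ p := hp.out.one_lt.le
  have hm : 1 ≤ m := by
    rcases Nat.eq_zero_or_pos m with h | h
    · simp [h] at hk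
    · exact h
  by_cases hmN : m ≤ N
  · rw [hczero m hm hmN, hν0] at hlt
    exact (not_top_lt hlt).elim
  · -- m > N, so (r0 - r) * (p*m) ≥ δ
    have hge := hc (p * m) hk
    have key : (p : ℚ) * (r * ((p * m : ℕ) : ℚ)) ≤ (p : ℚ) * (r0 * ((p * m : ℕ) : ℚ) - δ) := by
      have hmN' : (N : ℚ) ≤ (m : ℚ) := by exact_mod_cast le_of_lt (lt_of_not_ge hmN)
      have h1 : δ ≤ (r0 - r) * ((p * m : ℕ) : ℚ) := by
        calc δ ≤ (p : ℚ) * N * (r0 - s) := hNbound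
          _ ≤ (r0 - r) * ((p * m : ℕ) : ℚ) := by
            push_cast
            have hps : (0:ℚ) < p := by exact_mod_cast hp.out.pos
            nlinarith [mul_le_mul_of_nonneg_left hmN'
                (mul_pos hps (sub_pos.mpr hsr0)).le,
              mul_le_mul_of_nonneg_right (sub_le_sub_left hrs r0)
                (by positivity : (0:ℚ) ≤ (p:ℚ) * (m:ℚ))]
      have hpq : (0:ℚ) ≤ (p : ℚ) := by positivity
      nlinarith
    have : (((p : ℚ) * (r * ((p * m : ℕ) : ℚ)) : ℚ) : WithTop ℚ)
        ≤ ν (c (p * m)) := le_trans (by exact_mod_cast key) hge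
    exact absurd hlt (not_lt.mpr this)
end
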